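/- Let H ≥ 1 and let k ∈ [−1, 1]. Let (X₁, Y₁), …, (X_H, Y_H) be i.i.d. pairs, each jointly Gaussian with mean zero, Var(X_i) = Var(Y_i) = 1, and Cov(X_i, Y_i) = k. Then E[exp(−½ Σ_{i=1}^H (X_i − Y_i)²)] = (1 + 2(1 − k))^{−H/2}. In particular, taking k = k_SE(x,y) = exp(−½‖x−y‖²), the limiting covariance of the two-layer deep trigonometric network with i.i.d. standard Gaussian weights equals the two-layer deep Gaussian process kernel k_DGP(x,y) = (1 + 2(1 − k_SE(x,y)))^{−H/2}. -/

import Mathlib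

open MeasureTheory ProbabilityTheory Real Filter
open scoped NNReal ENNReal

lemma gauss_int (v : ℝ≥0) :
    ∫ x, Real.exp (-(1/2) * x ^ 2) ∂(gaussianReal 0 v) = (1 + (v : ℝ)) ^ (-(1:ℝ)/2) := by
  by_cases hv : v = 0
  · subst hv
    rw [gaussianReal_zero_var, integral_dirac]
    simp [Real.one_rpow]
  · have hvpos : 0 < (v : ℝ) := by positivity
    rw [gaussianReal_of_var_ne_zero 0 hv]
    have hpdf : gaussianPDF 0 v = fun x => ((Real.toNNReal (gaussianPDFReal 0 v x) : ℝ≥0) : ℝ≥0∞) := rfl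
    rw [hpdf, integral_withDensity_eq_integral_smul
      ((measurable_gaussianPDFReal 0 v).real_toNNReal)]
    have heq : ∀ x : ℝ, (Real.toNNReal (gaussianPDFReal 0 v x)) • Real.exp (-(1/2) * x ^ 2)
        = (Real.sqrt (2 * π * v))⁻¹ * Real.exp (-((1 + (v:ℝ)) / (2 * v)) * x ^ 2) := by
      intro x
      have hexp : -x ^ 2 / (2 * (v:ℝ)) + (-(1/2) * x ^ 2) = -((1 + (v:ℝ)) / (2 * v)) * x ^ 2 := by
        field_simp
        ring
      rw [NNReal.smul_def, Real.coe_toNNReal _ (gaussianPDFReal_nonneg 0 v x),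
        gaussianPDFReal_def]
      simp only [sub_zero, smul_eq_mul]
      rw [mul_assoc, ← Real.exp_add, hexp]
    simp_rw [heq]
    rw [integral_const_mul, integral_gaussian]
    have hb : (0:ℝ) < (1 + v) / (2 * v) := by positivity
    rw [← Real.sqrt_inv, ← Real.sqrt_mul (by positivity)]
    have h1 : (2 * π * (v:ℝ))⁻¹ * (π / ((1 + (v:ℝ)) / (2 * v))) = (1 + (v:ℝ))⁻¹ := by
      field_simp
    rw [h1, Real.sqrt_inv, Real.sqrt_eq_rpow, ← Real.rpow_neg_one,
      ← Real.rpow_mul (by positivity : (0:ℝ) ≤ 1 + (v:ℝ))]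
    norm_num

lemma iIndepFun_congr_ae {Ω ι : Type*} [MeasurableSpace Ω] {μ : Measure Ω} {β : ι → Type*}
    (m : ∀ i, MeasurableSpace (β i)) {f g : ∀ i, Ω → β i}
    (hf : iIndepFun f μ) (hfg : ∀ i, f i =ᵐ[μ] g i) : iIndepFun g μ := by
  rw [iIndepFun_iff_measure_inter_preimage_eq_mul] at hf ⊢
  intro S sets hsets
  have h1 : ∀ i ∈ S, μ (g i ⁻¹' sets i) = μ (f i ⁻¹' sets i) := by
    intro i _
    apply measure_congr
    filter_upwards [hfg i] with ω hω
    rw [eq_iff_iff]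
    change g i ω ∈ sets i ↔ f i ω ∈ sets i
    rw [hω]
  have h2 : μ (⋂ i ∈ S, g i ⁻¹' sets i) = μ (⋂ i ∈ S, f i ⁻¹' sets i) := by
    apply measure_congr
    have hall : ∀ᵐ ω ∂μ, ∀ i ∈ S, f i ω = g i ω :=
      (eventually_all_finset S).2 fun i _ => hfg i
    filter_upwards [hall] with ω hω
    rw [eq_iff_iff]
    change ω ∈ ⋂ i ∈ S, g i ⁻¹' sets i ↔ ω ∈ ⋂ i ∈ S, f i ⁻¹' sets i
    simp only [Set.mem_iInter, Set.mem_preimage]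
    exact forall₂_congr fun i hi => by rw [hω i hi]
  rw [h2, hf S hsets]
  exact (Finset.prod_congr rfl h1).symm

lemma integral_finset_prod_of_iIndepFun {Ω ι : Type*} [MeasurableSpace Ω] {μ : Measure Ω}
    [IsProbabilityMeasure μ] {f : ι → Ω → ℝ}
    (h : iIndepFun f μ) (hm : ∀ i, Measurable (f i))
    (s : Finset ι) : ∫ ω, ∏ i ∈ s, f i ω ∂μ = ∏ i ∈ s, ∫ ω, f i ω ∂μ := by
  classical
  induction s using Finset.induction_on with
  | empty => simp
  | @insert i s hi ih =>
    have hindep : IndepFun (f i) (∏ j ∈ s, f j) μ :=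
      (h.indepFun_finsetProd_of_notMem hm hi).symm
    have hM : AEStronglyMeasurable (∏ j ∈ s, f j) μ := by
      have h1 : Measurable fun ω => ∏ j ∈ s, f j ω := Finset.measurable_prod s fun j _ => hm j
      have h2 : (∏ j ∈ s, f j) = fun ω => ∏ j ∈ s, f j ω := by ext ω; rw [Finset.prod_apply]
      rw [h2]
      exact h1.aestronglyMeasurable
    calc ∫ ω, ∏ j ∈ insert i s, f j ω ∂μ
        = ∫ ω, f i ω * (∏ j ∈ s, f j) ω ∂μ := by
          simp_rw [Finset.prod_insert hi, Finset.prod_apply]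
      _ = (∫ ω, f i ω ∂μ) * ∫ ω, (∏ j ∈ s, f j) ω ∂μ :=
          hindep.integral_mul_eq_mul_integral (hm i).aestronglyMeasurable hM
      _ = ∏ j ∈ insert i s, ∫ ω, f j ω ∂μ := by
          simp_rw [Finset.prod_apply]
          rw [ih, Finset.prod_insert hi]

/-- For i.i.d. centered jointly Gaussian pairs `(Xᵢ, Yᵢ)` with unit variances and correlation
`k ∈ [−1,1]` (joint Gaussianity encoded by the linear-functional characterization),
`E[exp(−½ Σᵢ (Xᵢ − Yᵢ)²)] = (1 + 2(1 − k))^{−H/2}`: the two-layer deep GP kernel. -/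
theorem stmt14 {Ω : Type*} [MeasurableSpace Ω] (μ : Measure Ω) [IsProbabilityMeasure μ]
    (H : ℕ) (hH : 1 ≤ H) (k : ℝ) (hk : k ∈ Set.Icc (-1 : ℝ) 1)
    (X Y : Fin H → Ω → ℝ)
    (hindep : iIndepFun
      (fun i ω => (X i ω, Y i ω)) μ)
    (hgauss : ∀ i, ∀ a b : ℝ,
      Measure.map (fun ω => a * X i ω + b * Y i ω) μ
        = gaussianReal 0 (Real.toNNReal (a ^ 2 + b ^ 2 + 2 * a * b * k))) :
    ∫ ω, Real.exp (-(1 / 2) * ∑ i, (X i ω - Y i ω) ^ 2) ∂μ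
      = (1 + 2 * (1 - k)) ^ (-(H : ℝ) / 2) := by
  have hv0 : (0:ℝ) ≤ 2 - 2 * k := by linarith [hk.2]
  set v : ℝ≥0 := Real.toNNReal (2 - 2 * k) with hvdef
  set Z : Fin H → Ω → ℝ := fun i ω => X i ω - Y i ω with hZdef
  -- each Z i is Gaussian with variance 2 - 2k
  have hZmap : ∀ i, Measure.map (Z i) μ = gaussianReal 0 v := by
    intro i
    have h := hgauss i 1 (-1)
    have hfun : (fun ω => 1 * X i ω + (-1) * Y i ω) = Z i := by
      funext ω; simp [hZdef]; ring
    have hval : (1:ℝ) ^ 2 + (-1:ℝ) ^ 2 + 2 * 1 * (-1) * k = 2 - 2 * k := by ring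
    rw [hfun, hval] at h
    exact h
  have hZae : ∀ i, AEMeasurable (Z i) μ := by
    intro i
    exact aemeasurable_of_map_neZero (by rw [hZmap i]; infer_instance)
  set Z' : Fin H → Ω → ℝ := fun i => (hZae i).mk (Z i) with hZ'def
  have hZ'm : ∀ i, Measurable (Z' i) := fun i => (hZae i).measurable_mk
  have hZZ' : ∀ i, Z i =ᵐ[μ] Z' i := fun i => (hZae i).ae_eq_mk
  have hZ'map : ∀ i, Measure.map (Z' i) μ = gaussianReal 0 v := by
    intro i
    rw [← Measure.map_congr (hZZ' i)]
    exact hZmap i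
  -- independence of the Z', hence of the W
  have hZindep : iIndepFun Z μ :=
    hindep.comp (fun _ p => p.1 - p.2) (fun _ => measurable_fst.sub measurable_snd)
  have hZ'indep : iIndepFun Z' μ :=
    iIndepFun_congr_ae _ hZindep hZZ'
  set W : Fin H → Ω → ℝ := fun i ω => Real.exp (-(1/2) * Z' i ω ^ 2) with hWdef
  have hgm : Measurable fun x : ℝ => Real.exp (-(1/2) * x ^ 2) :=
    (((measurable_id.pow_const 2).const_mul _).exp)
  have hWindep : iIndepFun W μ :=
    hZ'indep.comp (fun _ x => Real.exp (-(1/2) * x ^ 2)) (fun _ => hgm)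
  have hWm : ∀ i, Measurable (W i) := fun i => hgm.comp (hZ'm i)
  -- rewrite the integrand
  have hcongr : ∫ ω, Real.exp (-(1 / 2) * ∑ i, (X i ω - Y i ω) ^ 2) ∂μ
      = ∫ ω, ∏ i, W i ω ∂μ := by
    apply integral_congr_ae
    have hall : ∀ᵐ ω ∂μ, ∀ i, Z i ω = Z' i ω := ae_all_iff.2 fun i => hZZ' i
    filter_upwards [hall] with ω hω
    calc Real.exp (-(1 / 2) * ∑ i, (X i ω - Y i ω) ^ 2)
        = ∏ i, Real.exp (-(1/2) * Z i ω ^ 2) := by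
          rw [Finset.mul_sum, Real.exp_sum]
      _ = ∏ i, W i ω := Finset.prod_congr rfl fun i _ => by rw [hω i]
  rw [hcongr, integral_finset_prod_of_iIndepFun hWindep hWm]
  -- each factor
  have hfact : ∀ i, ∫ ω, W i ω ∂μ = (1 + 2 * (1 - k)) ^ (-(1:ℝ)/2) := by
    intro i
    have h1 : ∫ ω, W i ω ∂μ = ∫ x, Real.exp (-(1/2) * x ^ 2) ∂(Measure.map (Z' i) μ) :=
      (integral_map (hZ'm i).aemeasurable hgm.aestronglyMeasurable).symm
    rw [h1, hZ'map i, gauss_int]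
    have hco : ((v : ℝ)) = 2 - 2 * k := Real.coe_toNNReal _ hv0
    rw [hco]
    norm_num
    ring_nf
  simp_rw [hfact]
  rw [Finset.prod_const, Finset.card_univ, Fintype.card_fin,
    ← Real.rpow_natCast ((1 + 2 * (1 - k)) ^ (-(1:ℝ)/2)) H,
    ← Real.rpow_mul (by linarith [hk.2] : (0:ℝ) ≤ 1 + 2 * (1 - k))]
  congr 1
  ring
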